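/- Let G be a graph, X ⊆ V(G), and A ⊆ E(G) with |A| ≥ |E(G)| − 1. Then ι(G_A) ≥ ι(G[X]_A), where G[X]_A denotes the graph obtained from the induced subgraph G[X] by subdividing those edges of G[X] that lie in A. -/

import Mathlib

open SimpleGraph

/-- `v` lies in the closed neighbourhood of the set `D`. -/
def inClosedNbhd {V : Type*} (G : SimpleGraph V) (D : Set V) (v : V) : Prop :=
  ∃ d ∈ D, d = v ∨ G.Adj d v

/-- `D` is an isolating set of `G`: the graph induced on the vertices outside
`N[D]` has no edges. -/
def IsIsolating {V : Type*} (G : SimpleGraph V) (D : Set V) : Prop :=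
  ∀ u v : V, G.Adj u v → inClosedNbhd G D u ∨ inClosedNbhd G D v

/-- The isolation number of a finite graph. -/
noncomputable def iso {V : Type*} (G : SimpleGraph V) [Fintype V] : ℕ :=
  sInf {n | ∃ D : Finset V, D.card = n ∧ IsIsolating G ↑D}

/-- The graph obtained from `G` by subdividing each edge in `A` once; the new
(subdivision) vertices are the elements of `A`. -/
def subdivide {V : Type*} (G : SimpleGraph V) (A : Finset (Sym2 V)) :
    SimpleGraph (V ⊕ {e : Sym2 V // e ∈ A}) where
  Adj x y :=
    match x, y with
    | Sum.inl u, Sum.inl v => G.Adj u v ∧ s(u, v) ∉ A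
    | Sum.inl u, Sum.inr e => u ∈ (e : Sym2 V)
    | Sum.inr e, Sum.inl u => u ∈ (e : Sym2 V)
    | Sum.inr _, Sum.inr _ => False
  symm := by
    refine ⟨?_⟩
    rintro (u | e) (v | f) h <;> dsimp only at h ⊢ <;>
      first
        | exact ⟨h.1.symm, by rw [Sym2.eq_swap]; exact h.2⟩
        | exact h
        | exact h.elim
  loopless := by
    refine ⟨?_⟩
    rintro (u | e) h <;> dsimp only at h <;>
      first
        | exact G.irrefl h.1
        | exact h

/-- A graph is `(ι,q)`-critical. -/
def IotaCritical {V : Type*} (G : SimpleGraph V) [Fintype V] (q : ℕ) : Prop :=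
  (∀ A : Finset (Sym2 V), ↑A ⊆ G.edgeSet → A.card = q →
      iso G < iso (subdivide G A)) ∧
  (∃ A : Finset (Sym2 V), ↑A ⊆ G.edgeSet ∧ A.card = q - 1 ∧
      iso (subdivide G A) = iso G)

section Aux

variable {V : Type*} [Fintype V] [DecidableEq V] (G : SimpleGraph V)
    [DecidableRel G.Adj] (X : Set V) [DecidablePred (· ∈ X)]
    (A : Finset (Sym2 V))

/-- At most one edge of `G` lies outside `A`. -/
lemma aux_unique_nonA (hA : ↑A ⊆ G.edgeSet) (hcard : G.edgeFinset.card - 1 ≤ A.card)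
    {e₁ e₂ : Sym2 V} (h1 : e₁ ∈ G.edgeSet) (h2 : e₂ ∈ G.edgeSet)
    (n1 : e₁ ∉ A) (n2 : e₂ ∉ A) : e₁ = e₂ := by
  have hsub : A ⊆ G.edgeFinset := fun e he => mem_edgeFinset.2 (hA he)
  have hle : (G.edgeFinset \ A).card ≤ 1 := by
    rw [Finset.card_sdiff_of_subset hsub]; omega
  exact Finset.card_le_one.mp hle e₁
    (Finset.mem_sdiff.2 ⟨mem_edgeFinset.2 h1, n1⟩) e₂
    (Finset.mem_sdiff.2 ⟨mem_edgeFinset.2 h2, n2⟩)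

local notation "A'" => (Finset.univ.filter (fun e : Sym2 X => Sym2.map Subtype.val e ∈ A))

lemma aux_memA' (e : Sym2 X) : e ∈ A' ↔ Sym2.map Subtype.val e ∈ A := by
  simp [Finset.mem_filter]

/-- The natural vertex embedding of the subdivided induced graph into the
subdivided graph. -/
noncomputable def auxF : (X ⊕ {e : Sym2 X // e ∈ A'}) → (V ⊕ {e : Sym2 V // e ∈ A})
  | Sum.inl x => Sum.inl ↑x
  | Sum.inr e => Sum.inr ⟨Sym2.map Subtype.val ↑e, ((aux_memA' X A _).1 e.2)⟩

lemma auxF_adj {x y : X ⊕ {e : Sym2 X // e ∈ A'}}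
    (h : (subdivide (G.induce X) A').Adj x y) :
    (subdivide G A).Adj (auxF X A x) (auxF X A y) := by
  match x, y with
  | Sum.inl u, Sum.inl v =>
    obtain ⟨h1, h2⟩ := h
    refine ⟨h1, fun hc => h2 ?_⟩
    rw [aux_memA', Sym2.map_pair_eq]
    exact hc
  | Sum.inl u, Sum.inr e =>
    exact Sym2.mem_map.2 ⟨u, h, rfl⟩
  | Sum.inr e, Sum.inl u =>
    exact Sym2.mem_map.2 ⟨u, h, rfl⟩
  | Sum.inr e, Sum.inr f => exact h.elim


/-- Replacement map. -/
noncomputable def auxR [Nonempty (X ⊕ {e : Sym2 X // e ∈ A'})] :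
    (V ⊕ {e : Sym2 V // e ∈ A}) → (X ⊕ {e : Sym2 X // e ∈ A'})
  | Sum.inl v =>
      if hv : v ∈ X then Sum.inl ⟨v, hv⟩
      else if h : ∃ u : X, G.Adj v ↑u ∧ s(v, ↑u) ∉ A then Sum.inl h.choose
      else Classical.arbitrary _
  | Sum.inr e =>
      if h : ∃ e' : Sym2 X, Sym2.map Subtype.val e' = e.1 then
        Sum.inr ⟨h.choose, (aux_memA' X A _).2 (by rw [h.choose_spec]; exact e.2)⟩
      else if h2 : ∃ u : X, ↑u ∈ e.1 then Sum.inl h2.choose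
      else Classical.arbitrary _

lemma auxR_inl [Nonempty (X ⊕ {e : Sym2 X // e ∈ A'})] (v : V) :
    auxR G X A (Sum.inl v) =
      (if hv : v ∈ X then Sum.inl ⟨v, hv⟩
       else if h : ∃ u : X, G.Adj v ↑u ∧ s(v, ↑u) ∉ A then Sum.inl h.choose
       else Classical.arbitrary _) := rfl

lemma auxR_inr [Nonempty (X ⊕ {e : Sym2 X // e ∈ A'})] (e : {e : Sym2 V // e ∈ A}) :
    auxR G X A (Sum.inr e) =
      (if h : ∃ e' : Sym2 X, Sym2.map Subtype.val e' = e.1 then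
        Sum.inr ⟨h.choose, (aux_memA' X A _).2 (by rw [h.choose_spec]; exact e.2)⟩
      else if h2 : ∃ u : X, ↑u ∈ e.1 then Sum.inl h2.choose
      else Classical.arbitrary _) := rfl

lemma aux_transfer (hA : ↑A ⊆ G.edgeSet) (hcard : G.edgeFinset.card - 1 ≤ A.card)
    (D : Finset (V ⊕ {e : Sym2 V // e ∈ A}))
    (hD : IsIsolating (subdivide G A) ↑D) :
    ∃ D' : Finset (X ⊕ {e : Sym2 X // e ∈ A'}),
      D'.card ≤ D.card ∧ IsIsolating (subdivide (G.induce X) A') ↑D' := by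
  classical
  by_cases hne : Nonempty (X ⊕ {e : Sym2 X // e ∈ A'})
  swap
  · exact ⟨∅, by simp, fun u v h => (hne ⟨u⟩).elim⟩
  haveI := hne
  set r := auxR G X A with hr
  -- key covering transfer
  have key : ∀ (d : V ⊕ {e : Sym2 V // e ∈ A}) (z : X ⊕ {e : Sym2 X // e ∈ A'}),
      (d = auxF X A z ∨ (subdivide G A).Adj d (auxF X A z)) →
      (r d = z ∨ (subdivide (G.induce X) A').Adj (r d) z) := by
    rintro (v | ⟨e, heA⟩) z hd
    · by_cases hv : v ∈ X
      · have hrd : r (Sum.inl v) = Sum.inl ⟨v, hv⟩ := by rw [hr, auxR_inl, dif_pos hv]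
        rcases hd with hd | hd
        · match z with
          | Sum.inl x =>
            left
            rw [hrd]
            cases hd
            rfl
          | Sum.inr e' => exact absurd hd (by simp [auxF])
        · match z with
          | Sum.inl x =>
            right
            rw [hrd]
            obtain ⟨h1, h2⟩ := hd
            refine ⟨h1, fun hc => h2 ?_⟩
            rw [aux_memA', Sym2.map_pair_eq] at hc
            exact hc
          | Sum.inr e' =>
            right
            rw [hrd]
            obtain ⟨a, ha, hav⟩ := Sym2.mem_map.1 hd
            show (⟨v, hv⟩ : X) ∈ (e' : Subtype _).1
            rwa [show (⟨v, hv⟩ : X) = a from Subtype.ext hav.symm]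
      · rcases hd with hd | hd
        · match z with
          | Sum.inl x =>
            have hvx : v = ↑x := Sum.inl.inj hd
            subst hvx
            exact absurd x.2 hv
          | Sum.inr e' => exact absurd hd (by simp [auxF])
        · match z with
          | Sum.inl x =>
            obtain ⟨h1, h2⟩ := hd
            have hex : ∃ u : X, G.Adj v ↑u ∧ s(v, ↑u) ∉ A := ⟨x, h1, h2⟩
            have hrd : r (Sum.inl v) = Sum.inl hex.choose := by rw [hr, auxR_inl, dif_neg hv, dif_pos hex]
            obtain ⟨hc1, hc2⟩ := hex.choose_spec
            have : s(v, (hex.choose : V)) = s(v, (x : V)) :=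
              aux_unique_nonA G A hA hcard hc1 h1 hc2 h2
            left
            rw [hrd]
            exact congrArg Sum.inl (Subtype.ext (Sym2.congr_right.1 this))
          | Sum.inr e' =>
            obtain ⟨a, _, hav⟩ := Sym2.mem_map.1 hd
            exact absurd (hav ▸ a.2) hv
    · by_cases h : ∃ e' : Sym2 X, Sym2.map Subtype.val e' = e
      · have hrd : r (Sum.inr ⟨e, heA⟩) =
            Sum.inr ⟨h.choose, (aux_memA' X A _).2 (by rw [h.choose_spec]; exact heA)⟩ := by
          rw [hr, auxR_inr, dif_pos h]
        rcases hd with hd | hd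
        · match z with
          | Sum.inl x => exact absurd hd (by simp [auxF])
          | Sum.inr e' =>
            left
            rw [hrd]
            have he' : Sym2.map Subtype.val (e' : Subtype _).1 = e :=
              (congrArg Subtype.val (Sum.inr.inj hd)).symm
            have : h.choose = (e' : Subtype _).1 :=
              Sym2.map.injective Subtype.val_injective (h.choose_spec.trans he'.symm)
            exact congrArg Sum.inr (Subtype.ext this)
        · match z with
          | Sum.inl x =>
            right
            rw [hrd]
            have hx : (x : V) ∈ e := hd
            show x ∈ h.choose
            rw [← h.choose_spec] at hx
            obtain ⟨a, ha, hax⟩ := Sym2.mem_map.1 hx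
            rwa [show x = a from Subtype.ext hax.symm]
          | Sum.inr e' => exact hd.elim
      · rcases hd with hd | hd
        · match z with
          | Sum.inl x => exact absurd hd (by simp [auxF])
          | Sum.inr e' =>
            exfalso
            apply h
            exact ⟨(e' : Subtype _).1, (congrArg Subtype.val (Sum.inr.inj hd)).symm⟩
        · match z with
          | Sum.inl x =>
            have hx : (x : V) ∈ e := hd
            have h2 : ∃ u : X, ↑u ∈ e := ⟨x, hx⟩
            have hrd : r (Sum.inr ⟨e, heA⟩) = Sum.inl h2.choose := by rw [hr, auxR_inr, dif_neg h, dif_pos h2]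
            left
            rw [hrd]
            refine congrArg Sum.inl ?_
            by_contra hne'
            have hvne : (h2.choose : V) ≠ (x : V) := fun hc => hne' (Subtype.ext hc)
            have : e = s((h2.choose : V), (x : V)) :=
              (Sym2.mem_and_mem_iff hvne).1 ⟨h2.choose_spec, hx⟩
            apply h
            exact ⟨s(h2.choose, x), by rw [Sym2.map_pair_eq]; exact this.symm⟩
          | Sum.inr e' => exact hd.elim
  refine ⟨D.image r, Finset.card_image_le, ?_⟩
  intro u v huv
  rcases hD (auxF X A u) (auxF X A v) (auxF_adj G X A huv) with ⟨d, hdD, hd⟩ | ⟨d, hdD, hd⟩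
  · exact Or.inl ⟨r d, Finset.mem_coe.2 (Finset.mem_image_of_mem r hdD), key d u hd⟩
  · exact Or.inr ⟨r d, Finset.mem_coe.2 (Finset.mem_image_of_mem r hdD), key d v hd⟩

end Aux

theorem stmt9 {V : Type*} [Fintype V] [DecidableEq V] (G : SimpleGraph V)
    [DecidableRel G.Adj] (X : Set V) [DecidablePred (· ∈ X)]
    (A : Finset (Sym2 V)) (hA : ↑A ⊆ G.edgeSet)
    (hcard : G.edgeFinset.card - 1 ≤ A.card) :
    iso (subdivide (G.induce X)
      (Finset.univ.filter (fun e : Sym2 X => Sym2.map Subtype.val e ∈ A)))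
      ≤ iso (subdivide G A) := by
  classical
  have hne : {n | ∃ D : Finset (V ⊕ {e : Sym2 V // e ∈ A}), D.card = n ∧
      IsIsolating (subdivide G A) ↑D}.Nonempty :=
    ⟨(Finset.univ : Finset (V ⊕ {e : Sym2 V // e ∈ A})).card, Finset.univ, rfl,
      fun u v _ => Or.inl ⟨u, by simp, Or.inl rfl⟩⟩
  obtain ⟨D, hDcard, hD⟩ := Nat.sInf_mem hne
  obtain ⟨D', hD'card, hD'⟩ := aux_transfer G X A hA hcard D hD
  calc iso (subdivide (G.induce X) _) ≤ D'.card := Nat.sInf_le ⟨D', rfl, hD'⟩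
    _ ≤ D.card := hD'card
    _ = _ := hDcard
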